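/- Let k, n, m be positive integers, and for orders Fin k let y : Fin k → Fin n be period assignments, d : Fin k → ℕ demands, t : Fin k → Fin m product types, and p : Fin k → ℕ priorities. Suppose i ≠ j are orders with d i = d j, t i = t j, p i ≥ p j, and y i > y j, and let y' = y ∘ (swap i j) be the assignment obtained by exchanging the periods of i and j. Then: (a) for every period b and every product type τ, the sum of d l over orders l with y' l = b and t l = τ equals the sum of d l over orders l with y l = b and t l = τ (hence all per-period and per-product loads, and thus the leveling objectives, are unchanged); and (b) the number of priority inversions of (y', p) is at most the number of priority inversions of (y, p). -/

import Mathlib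

/-- Dominance rule justifying the symmetry-breaking constraint of the MIP
model: swapping the periods of two orders with equal demand and product type,
where the higher-prioritized one is planned later, leaves all per-period,
per-product loads unchanged and does not increase the number of priority
inversions. -/
theorem swap_dominance (k n m : ℕ) (hk : 0 < k) (hn : 0 < n) (hm : 0 < m)
    (y : Fin k → Fin n) (d : Fin k → ℕ) (t : Fin k → Fin m) (p : Fin k → ℕ)
    (i j : Fin k) (hij : i ≠ j) (hd : d i = d j) (ht : t i = t j)
    (hp : p i ≥ p j) (hy : y i > y j)
    (y' : Fin k → Fin n) (hy' : y' = y ∘ (Equiv.swap i j)) :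
    (∀ (b : Fin n) (τ : Fin m),
      ∑ l ∈ Finset.univ.filter (fun l => y' l = b ∧ t l = τ), d l =
      ∑ l ∈ Finset.univ.filter (fun l => y l = b ∧ t l = τ), d l) ∧
    (Finset.univ.filter
        (fun ll : Fin k × Fin k => y' ll.1 > y' ll.2 ∧ p ll.1 > p ll.2)).card ≤
      (Finset.univ.filter
        (fun ll : Fin k × Fin k => y ll.1 > y ll.2 ∧ p ll.1 > p ll.2)).card := by
  subst hy'
  set σ := Equiv.swap i j with hσ
  have hts : ∀ l, t (σ l) = t l := by
    intro l
    rcases eq_or_ne l i with rfl | hli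
    · simp [σ, ht]
    rcases eq_or_ne l j with rfl | hlj
    · simp [σ, ht]
    · simp [σ, Equiv.swap_apply_of_ne_of_ne hli hlj]
  have hds : ∀ l, d (σ l) = d l := by
    intro l
    rcases eq_or_ne l i with rfl | hli
    · simp [σ, hd]
    rcases eq_or_ne l j with rfl | hlj
    · simp [σ, hd]
    · simp [σ, Equiv.swap_apply_of_ne_of_ne hli hlj]
  constructor
  · intro b τ
    rw [Finset.sum_filter, Finset.sum_filter,
      ← Equiv.sum_comp σ (fun l => if y l = b ∧ t l = τ then d l else 0)]
    apply Finset.sum_congr rfl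
    intro l _
    simp only [Function.comp_apply, hts l, hds l]
  · apply Finset.card_le_card_of_injOn
      (fun q => if y q.1 > y q.2 ∧ p q.1 > p q.2 then q else (σ q.1, σ q.2))
    · intro q hq
      simp only [Finset.mem_coe, Finset.mem_filter, Finset.mem_univ, true_and,
        Function.comp_apply] at hq ⊢
      by_cases h : y q.1 > y q.2 ∧ p q.1 > p q.2
      · simp only [h, if_true]; exact ⟨h.1, h.2⟩
      · simp only [h, if_false]
        refine ⟨hq.1, ?_⟩
        have hny : ¬ y q.1 > y q.2 := fun h' => h ⟨h', hq.2⟩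
        obtain ⟨a, b⟩ := q
        simp only at hq hny ⊢
        rcases eq_or_ne a i with hai | hai
        · rcases eq_or_ne b j with hbj | hbj
          · rw [hai, hbj] at hq
            simp only [σ, Equiv.swap_apply_left, Equiv.swap_apply_right] at hq
            exact absurd hq.1 (lt_asymm hy)
          rcases eq_or_ne b i with hbi | hbi
          · rw [hai, hbi] at hq
            exact absurd hq.1 (lt_irrefl _)
          · -- a = i, b outside
            rw [hai] at hq hny ⊢
            simp only [σ, Equiv.swap_apply_left,
              Equiv.swap_apply_of_ne_of_ne hbi hbj] at hq ⊢
            exact absurd (lt_trans hq.1 hy) hny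
        rcases eq_or_ne a j with haj | haj
        · rcases eq_or_ne b i with hbi | hbi
          · rw [haj, hbi] at hq
            exact absurd hq.2 (not_lt.mpr hp)
          rcases eq_or_ne b j with hbj | hbj
          · rw [haj, hbj] at hq
            exact absurd hq.1 (lt_irrefl _)
          · -- a = j, b outside: goal p i > p b
            rw [haj] at hq ⊢
            simp only [σ, Equiv.swap_apply_right,
              Equiv.swap_apply_of_ne_of_ne hbi hbj] at hq ⊢
            exact lt_of_lt_of_le hq.2 hp
        · rcases eq_or_ne b i with hbi | hbi
          · -- b = i, a outside: goal p a > p j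
            rw [hbi] at hq ⊢
            simp only [σ, Equiv.swap_apply_left,
              Equiv.swap_apply_of_ne_of_ne hai haj] at hq ⊢
            exact lt_of_le_of_lt hp hq.2
          rcases eq_or_ne b j with hbj | hbj
          · -- b = j, a outside
            rw [hbj] at hq hny ⊢
            simp only [σ, Equiv.swap_apply_right,
              Equiv.swap_apply_of_ne_of_ne hai haj] at hq ⊢
            exact absurd (lt_trans hy hq.1) hny
          · simp only [σ, Equiv.swap_apply_of_ne_of_ne hai haj,
              Equiv.swap_apply_of_ne_of_ne hbi hbj] at hq ⊢
            exact absurd hq.1 hny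
    · intro q1 h1 q2 h2 heq
      dsimp only at heq
      simp only [Finset.mem_filter, Finset.mem_univ, true_and,
        Finset.coe_filter, Set.mem_setOf_eq, Function.comp_apply] at h1 h2
      by_cases c1 : y q1.1 > y q1.2 ∧ p q1.1 > p q1.2 <;>
        by_cases c2 : y q2.1 > y q2.2 ∧ p q2.1 > p q2.2
      · rwa [if_pos c1, if_pos c2] at heq
      · rw [if_pos c1, if_neg c2] at heq
        exfalso
        obtain ⟨e1, e2⟩ := Prod.ext_iff.mp heq
        apply c2
        refine ⟨?_, h2.2⟩
        have h1' := h1.1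
        rw [e1, e2, Equiv.swap_apply_self, Equiv.swap_apply_self] at h1'
        exact h1'
      · rw [if_neg c1, if_pos c2] at heq
        exfalso
        obtain ⟨e1, e2⟩ := Prod.ext_iff.mp heq.symm
        apply c1
        refine ⟨?_, h1.2⟩
        have h2' := h2.1
        rw [e1, e2, Equiv.swap_apply_self, Equiv.swap_apply_self] at h2'
        exact h2'
      · rw [if_neg c1, if_neg c2] at heq
        obtain ⟨e1, e2⟩ := Prod.ext_iff.mp heq
        exact Prod.ext (σ.injective e1) (σ.injective e2)
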